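/- Let F_1, …, F_n be pairwise disjoint matchings of size n in a graph, and let q be the maximum size of a rainbow matching. Then (3n − 4q)(n − q) ≤ 6q. -/
import Mathlib

namespace Stmt19
variable {V : Type*} [DecidableEq V]

def evs (e : Sym2 V) : Finset V :=
  Sym2.lift ⟨fun a b => {a, b}, fun a b => Finset.pair_comm a b⟩ e

lemma evs_mk (x y : V) : evs s(x, y) = {x, y} := rfl

@[simp] lemma mem_evs {v : V} {e : Sym2 V} : v ∈ evs e ↔ v ∈ e := by
  induction e using Sym2.ind with
  | _ x y => simp [evs_mk, Sym2.mem_iff, Finset.mem_insert]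

lemma card_evs_of_not_isDiag {e : Sym2 V} (h : ¬ e.IsDiag) : (evs e).card = 2 := by
  induction e using Sym2.ind with
  | _ x y =>
    rw [Sym2.mk_isDiag_iff] at h
    rw [evs_mk, Finset.card_pair h]

structure Ctx (V : Type*) [DecidableEq V] where
  n : ℕ
  F : Fin n → Finset (Sym2 V)
  I : Finset (Fin n)
  c : Fin n → Sym2 V
  hnd : ∀ i, ∀ e ∈ F i, ¬ e.IsDiag
  hmatch : ∀ i, ∀ e ∈ F i, ∀ f ∈ F i, e ≠ f → ∀ v, v ∈ e → v ∉ f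
  hsize : ∀ i, (F i).card = n
  hdisjF : ∀ i j, i ≠ j → Disjoint (F i) (F j)
  hc : ∀ i ∈ I, c i ∈ F i
  hdisj : ∀ i ∈ I, ∀ j ∈ I, i ≠ j → ∀ v, v ∈ c i → v ∉ c j
  hmax : ∀ (J : Finset (Fin n)) (d : Fin n → Sym2 V),
      (∀ i ∈ J, d i ∈ F i) →
      (∀ i ∈ J, ∀ j ∈ J, i ≠ j → ∀ v, v ∈ d i → v ∉ d j) →
      J.card ≤ I.card

namespace Ctx
variable (C : Ctx V)

def q : ℕ := C.I.card

def VR : Finset V := C.I.biUnion fun j => evs (C.c j)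

variable {C}

lemma mem_VR {j : Fin C.n} (hj : j ∈ C.I) {v : V} (hv : v ∈ C.c j) : v ∈ C.VR :=
  Finset.mem_biUnion.2 ⟨j, hj, mem_evs.2 hv⟩

lemma exists_of_mem_VR {v : V} (hv : v ∈ C.VR) : ∃ j ∈ C.I, v ∈ C.c j := by
  rcases Finset.mem_biUnion.1 hv with ⟨j, hj, hv⟩
  exact ⟨j, hj, mem_evs.1 hv⟩

lemma card_VR : C.VR.card = 2 * C.q := by
  rw [VR, Finset.card_biUnion]
  · rw [Finset.sum_congr rfl fun j hj => card_evs_of_not_isDiag (C.hnd j _ (C.hc j hj))]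
    simp [q, mul_comm]
  · intro a ha b hb hab
    simp only [Finset.disjoint_left, mem_evs]
    intro v hv
    exact C.hdisj a ha b hb hab v hv

/-- Extension lemma: a rainbow matching built from part of `I` plus new colours. -/
lemma ext_le {I' N : Finset (Fin C.n)} (hI' : I' ⊆ C.I) (hN : ∀ a ∈ N, a ∉ C.I)
    (nd : Fin C.n → Sym2 V) (hmem : ∀ a ∈ N, nd a ∈ C.F a)
    (hNN : ∀ a ∈ N, ∀ b ∈ N, a ≠ b → ∀ v, v ∈ nd a → v ∉ nd b)
    (hNO : ∀ a ∈ N, ∀ j ∈ I', ∀ v, v ∈ nd a → v ∉ C.c j) :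
    I'.card + N.card ≤ C.q := by
  classical
  have hdisjIN : Disjoint I' N := by
    rw [Finset.disjoint_left]
    intro a haI haN
    exact hN a haN (hI' haI)
  have hcard : (I' ∪ N).card = I'.card + N.card := Finset.card_union_of_disjoint hdisjIN
  rw [← hcard]
  refine C.hmax (I' ∪ N) (fun a => if a ∈ N then nd a else C.c a) ?_ ?_
  · intro a ha
    by_cases haN : a ∈ N
    · simpa [haN] using hmem a haN
    · have haI : a ∈ I' := by
        rcases Finset.mem_union.1 ha with h | h
        · exact h
        · exact absurd h haN
      simpa [haN] using C.hc a (hI' haI)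
  · intro a ha b hb hab v hva hvb
    have haI : a ∉ N → a ∈ I' := by
      intro h; rcases Finset.mem_union.1 ha with h' | h'; exact h'; exact absurd h' h
    have hbI : b ∉ N → b ∈ I' := by
      intro h; rcases Finset.mem_union.1 hb with h' | h'; exact h'; exact absurd h' h
    by_cases haN : a ∈ N <;> by_cases hbN : b ∈ N
    · simp only [haN, hbN, if_pos] at hva hvb
      exact hNN a haN b hbN hab v hva hvb
    · simp only [haN, hbN, if_pos, if_neg, if_false] at hva hvb
      exact hNO a haN b (hbI hbN) v hva hvb
    · simp only [haN, hbN, if_pos, if_neg, if_false] at hva hvb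
      exact hNO b hbN a (haI haN) v hvb hva
    · simp only [haN, hbN, if_neg, if_false] at hva hvb
      exact C.hdisj a (hI' (haI haN)) b (hI' (hbI hbN)) hab v hva hvb

/-- Every edge of an unused colour meets the vertex set of the rainbow matching. -/
lemma meets {k : Fin C.n} (hk : k ∉ C.I) {e : Sym2 V} (he : e ∈ C.F k) :
    (evs e ∩ C.VR).Nonempty := by
  rw [Finset.nonempty_iff_ne_empty]
  intro hemp
  have key : C.I.card + ({k} : Finset (Fin C.n)).card ≤ C.q := by
    refine ext_le (le_refl C.I) ?_ (fun _ => e) ?_ ?_ ?_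
    · intro a ha
      rw [Finset.mem_singleton] at ha
      subst ha; exact hk
    · intro a ha
      rw [Finset.mem_singleton] at ha
      subst ha; exact he
    · intro a ha b hb hab
      rw [Finset.mem_singleton] at ha hb
      subst ha; subst hb; exact absurd rfl hab
    · intro a _ j hj v hv hvc
      have : v ∈ evs e ∩ C.VR := Finset.mem_inter.2 ⟨mem_evs.2 hv, mem_VR hj hvc⟩
      rw [hemp] at this
      exact absurd this (Finset.notMem_empty v)
  simp [q] at key


variable (C : Ctx V)

/-- covered vertices of `V(R)` by colour `k`. -/
def cov (k : Fin C.n) : Finset V := (C.F k).biUnion fun e => evs e ∩ C.VR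

/-- pendant edges of colour `k`. -/
def pE (k : Fin C.n) : Finset (Sym2 V) := (C.F k).filter fun e => (evs e ∩ C.VR).card = 1

/-- pendant vertices of colour `k`. -/
def pend (k : Fin C.n) : Finset V := (C.pE k).biUnion fun e => evs e ∩ C.VR

variable {C}

lemma edge_disj {k : Fin C.n} {e f : Sym2 V} (he : e ∈ C.F k) (hf : f ∈ C.F k) (hef : e ≠ f) :
    Disjoint (evs e ∩ C.VR) (evs f ∩ C.VR) := by
  refine Finset.disjoint_left.2 fun v hv hv' => ?_
  have h1 := mem_evs.1 (Finset.mem_inter.1 hv).1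
  have h2 := mem_evs.1 (Finset.mem_inter.1 hv').1
  exact C.hmatch k e he f hf hef v h1 h2

lemma edge_unique {k : Fin C.n} {e f : Sym2 V} (he : e ∈ C.F k) (hf : f ∈ C.F k) {v : V}
    (hv : v ∈ e) (hv' : v ∈ f) : e = f := by
  by_contra hef
  exact C.hmatch k e he f hf hef v hv hv'

lemma cov_subset_VR (k : Fin C.n) : C.cov k ⊆ C.VR := by
  intro v hv
  rcases Finset.mem_biUnion.1 hv with ⟨e, _, hv⟩
  exact (Finset.mem_inter.1 hv).2

lemma pend_subset_VR (k : Fin C.n) : C.pend k ⊆ C.VR := by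
  intro v hv
  rcases Finset.mem_biUnion.1 hv with ⟨e, _, hv⟩
  exact (Finset.mem_inter.1 hv).2

lemma card_pend (k : Fin C.n) : (C.pend k).card = (C.pE k).card := by
  rw [pend, Finset.card_biUnion]
  · refine (Finset.sum_congr rfl fun e he => (Finset.mem_filter.1 he).2).trans ?_
    rw [Finset.sum_const, smul_eq_mul, mul_one]
    rfl
  · intro a ha b hb hab
    exact edge_disj (Finset.mem_filter.1 ha).1 (Finset.mem_filter.1 hb).1 hab

/-- Main per-colour count: `2n ≤ |cov k| + |pend k|` for unused `k`. -/
lemma cov_pend_count {k : Fin C.n} (hk : k ∉ C.I) :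
    2 * C.n ≤ (C.cov k).card + (C.pend k).card := by
  have hpE : C.pE k = (C.F k).filter (fun e => (evs e ∩ C.VR).card = 1) := rfl
  have hcov : (C.cov k).card = ∑ e ∈ C.F k, (evs e ∩ C.VR).card := by
    rw [cov, Finset.card_biUnion]
    intro a ha b hb hab
    exact edge_disj ha hb hab
  have hsplit := Finset.sum_filter_add_sum_filter_not (C.F k)
      (fun e => (evs e ∩ C.VR).card = 1) (fun e => (evs e ∩ C.VR).card)
  have h1 : ∑ e ∈ (C.F k).filter (fun e => (evs e ∩ C.VR).card = 1), (evs e ∩ C.VR).card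
      = ((C.F k).filter (fun e => (evs e ∩ C.VR).card = 1)).card := by
    refine (Finset.sum_congr rfl fun e he => (Finset.mem_filter.1 he).2).trans ?_
    simp
  have h2 : ∀ e ∈ (C.F k).filter (fun e => ¬(evs e ∩ C.VR).card = 1),
      2 ≤ (evs e ∩ C.VR).card := by
    intro e he
    have he' := Finset.mem_filter.1 he
    have hpos := Finset.card_pos.2 (meets hk he'.1)
    have hne := he'.2
    omega
  have h2' := Finset.card_nsmul_le_sum _ _ _ h2
  simp only [smul_eq_mul] at h2'
  have hcards := Finset.card_filter_add_card_filter_not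
      (s := C.F k) (p := fun e => (evs e ∩ C.VR).card = 1)
  rw [C.hsize k] at hcards
  rw [card_pend, hpE, hcov, ← hsplit, h1]
  omega

/-- extraction of a pendant edge. -/
lemma pend_edge {k : Fin C.n} {v : V} (h : v ∈ C.pend k) :
    ∃ w, w ∉ C.VR ∧ w ≠ v ∧ s(v, w) ∈ C.F k := by
  rcases Finset.mem_biUnion.1 h with ⟨e, he, hv⟩
  have he' := Finset.mem_filter.1 he
  have hvev : v ∈ e := mem_evs.1 (Finset.mem_inter.1 hv).1
  refine ⟨Sym2.Mem.other' hvev, ?_, ?_, ?_⟩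
  · intro hw
    have hwmem : Sym2.Mem.other' hvev ∈ evs e ∩ C.VR :=
      Finset.mem_inter.2 ⟨mem_evs.2 (Sym2.other_mem' hvev), hw⟩
    rcases Finset.card_eq_one.1 he'.2 with ⟨a, ha⟩
    rw [ha, Finset.mem_singleton] at hwmem hv
    have hne : Sym2.Mem.other' hvev ≠ v := by
      intro heq
      have hd := C.hnd k e he'.1
      rw [← Sym2.other_spec' hvev, Sym2.mk_isDiag_iff] at hd
      exact hd heq.symm
    exact hne (hwmem.trans hv.symm)
  · intro heq
    have hd := C.hnd k e he'.1
    rw [← Sym2.other_spec' hvev, Sym2.mk_isDiag_iff] at hd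
    exact hd heq.symm
  · rw [Sym2.other_spec' hvev]
    exact he'.1

/-- converse: an edge with exactly one endpoint in `VR` gives a pendant vertex. -/
lemma mem_pend {k : Fin C.n} {v w : V} (hvw : s(v, w) ∈ C.F k) (hv : v ∈ C.VR)
    (hw : w ∉ C.VR) : v ∈ C.pend k := by
  have hvne : v ≠ w := by
    intro h
    exact (C.hnd k _ hvw) (by rw [Sym2.mk_isDiag_iff]; exact h)
  have hset : evs s(v, w) ∩ C.VR = {v} := by
    rw [evs_mk]
    ext a
    simp only [Finset.mem_inter, Finset.mem_insert, Finset.mem_singleton]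
    constructor
    · rintro ⟨h1 | h1, h2⟩
      · exact h1
      · subst h1; exact absurd h2 hw
    · rintro rfl; exact ⟨Or.inl rfl, hv⟩
  refine Finset.mem_biUnion.2 ⟨s(v, w), ?_, ?_⟩
  · exact Finset.mem_filter.2 ⟨hvw, by rw [hset]; simp⟩
  · rw [hset]; simp


variable (C : Ctx V)

def Uset : Finset (Fin C.n) := C.Iᶜ

def u : ℕ := C.Uset.card

/-- number of unused colours having a pendant edge at `v`. -/
def Pend (v : V) : ℕ := (C.Uset.filter fun k => v ∈ C.pend k).card

variable {C}

lemma mem_Uset {k : Fin C.n} : k ∈ C.Uset ↔ k ∉ C.I := Finset.mem_compl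

lemma q_add_u : C.q + C.u = C.n := by
  have h1 : C.I.card ≤ Fintype.card (Fin C.n) := Finset.card_le_univ _
  have h2 := Finset.card_compl (C.I)
  rw [Fintype.card_fin] at h2 h1
  simp only [u, Uset, q, h2]
  omega

lemma Pend_le_u (v : V) : C.Pend v ≤ C.u :=
  Finset.card_le_card (Finset.filter_subset _ _)

/-- two distinct colours cannot share an edge. -/
lemma shared_edge {a b : Fin C.n} (hab : a ≠ b) {e : Sym2 V}
    (ha : e ∈ C.F a) (hb : e ∈ C.F b) : False :=
  Finset.disjoint_left.1 (C.hdisjF a b hab) ha hb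

lemma nd_of_edge {j : Fin C.n} (hj : j ∈ C.I) {x y : V} (hxy : C.c j = s(x, y)) : x ≠ y := by
  have := C.hnd j _ (C.hc j hj)
  rw [hxy, Sym2.mk_isDiag_iff] at this
  exact this

lemma VR_of_c {j : Fin C.n} (hj : j ∈ C.I) {x y : V} (hxy : C.c j = s(x, y)) :
    x ∈ C.VR ∧ y ∈ C.VR :=
  ⟨mem_VR hj (by rw [hxy]; exact Sym2.mem_mk_left x y),
   mem_VR hj (by rw [hxy]; exact Sym2.mem_mk_right x y)⟩

/-- Core swap: pendants at the two ends of an `R`-edge from distinct unused colours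
must share their outer vertex. -/
lemma wcollide {j : Fin C.n} (hj : j ∈ C.I) {x y : V} (hxy : C.c j = s(x, y))
    {a b : Fin C.n} (ha : a ∉ C.I) (hb : b ∉ C.I) (hab : a ≠ b)
    {wa wb : V} (hwa : wa ∉ C.VR) (hwb : wb ∉ C.VR)
    (hEa : s(x, wa) ∈ C.F a) (hEb : s(y, wb) ∈ C.F b) : wa = wb := by
  by_contra hne
  obtain ⟨hxVR, hyVR⟩ := VR_of_c hj hxy
  have hxney : x ≠ y := nd_of_edge hj hxy
  have hwax : wa ≠ x := fun h => hwa (h ▸ hxVR)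
  have hwby : wb ≠ y := fun h => hwb (h ▸ hyVR)
  have hq1 : 1 ≤ C.q := Finset.card_pos.2 ⟨j, hj⟩
  have hdisjnew : ∀ v, v ∈ (s(x, wa) : Sym2 V) → v ∉ (s(y, wb) : Sym2 V) := by
    intro v hv hv'
    rw [Sym2.mem_iff] at hv hv'
    rcases hv with rfl | rfl <;> rcases hv' with h | h
    · exact hxney h
    · exact hwb (h ▸ hxVR)
    · exact hwa (h ▸ hyVR)
    · exact hne h
  have hold : ∀ (e : Sym2 V), (e = s(x, wa) ∨ e = s(y, wb)) →
      ∀ j' ∈ C.I.erase j, ∀ v, v ∈ e → v ∉ C.c j' := by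
    rintro e he j' hj' v hv hvc
    obtain ⟨hj'ne, hj'I⟩ := Finset.mem_erase.1 hj'
    have hvVR : v ∈ C.VR := mem_VR hj'I hvc
    have hvcj : v ∈ C.c j → False := fun h =>
      C.hdisj j hj j' hj'I (Ne.symm hj'ne) v h hvc
    rcases he with rfl | rfl <;> rw [Sym2.mem_iff] at hv
    · rcases hv with h | h
      · exact hvcj (by rw [hxy, h]; exact Sym2.mem_mk_left x y)
      · rw [h] at hvVR; exact hwa hvVR
    · rcases hv with h | h
      · exact hvcj (by rw [hxy, h]; exact Sym2.mem_mk_right x y)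
      · rw [h] at hvVR; exact hwb hvVR
  have key : (C.I.erase j).card + ({a, b} : Finset (Fin C.n)).card ≤ C.q := by
    refine ext_le (Finset.erase_subset _ _) ?_
      (fun t => if t = a then s(x, wa) else s(y, wb)) ?_ ?_ ?_
    · intro t ht
      rcases Finset.mem_insert.1 ht with rfl | ht
      · exact ha
      · rw [Finset.mem_singleton] at ht; subst ht; exact hb
    · intro t ht
      rcases Finset.mem_insert.1 ht with rfl | ht
      · simpa using hEa
      · rw [Finset.mem_singleton] at ht; subst ht
        simp only [if_neg (Ne.symm hab)]
        exact hEb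
    · intro s hs t ht hst v hvs hvt
      rcases Finset.mem_insert.1 hs with rfl | hs
      · have htb : t = b := by
          rcases Finset.mem_insert.1 ht with rfl | ht
          · exact absurd rfl hst
          · exact Finset.mem_singleton.1 ht
        subst htb
        simp only [if_pos rfl] at hvs
        simp only [if_neg (Ne.symm hab)] at hvt
        exact hdisjnew v hvs hvt
      · rw [Finset.mem_singleton] at hs; subst hs
        have hta : t = a := by
          rcases Finset.mem_insert.1 ht with rfl | ht
          · rfl
          · rw [Finset.mem_singleton] at ht; exact absurd ht.symm hst
        subst hta
        simp only [if_pos rfl] at hvt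
        simp only [if_neg (Ne.symm hab)] at hvs
        exact hdisjnew v hvt hvs
    · intro t ht j' hj' v hv
      rcases Finset.mem_insert.1 ht with rfl | ht
      · simp only [if_pos rfl] at hv
        exact hold _ (Or.inl rfl) j' hj' v hv
      · rw [Finset.mem_singleton] at ht; subst ht
        simp only [if_neg (Ne.symm hab)] at hv
        exact hold _ (Or.inr rfl) j' hj' v hv
  rw [Finset.card_erase_of_mem hj, Finset.card_pair hab] at key
  have hqdef : C.q = C.I.card := rfl
  omega


/-- extraction of a pendant edge from a `Pend`-witness. -/
lemma pend_edge_of_filter {v : V} {k : Fin C.n}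
    (hk : k ∈ C.Uset.filter fun k' => v ∈ C.pend k') :
    k ∉ C.I ∧ ∃ w, w ∉ C.VR ∧ w ≠ v ∧ s(v, w) ∈ C.F k := by
  obtain ⟨hk1, hk2⟩ := Finset.mem_filter.1 hk
  exact ⟨mem_Uset.1 hk1, pend_edge hk2⟩

/-- Lemma A: if the other endpoint has a pendant, at most 2 colours are pendant here. -/
lemma PendA {j : Fin C.n} (hj : j ∈ C.I) {x y : V} (hxy : C.c j = s(x, y))
    (hy1 : 1 ≤ C.Pend y) : C.Pend x ≤ 2 := by
  by_contra hgt
  have h3 : 3 ≤ (C.Uset.filter fun k => x ∈ C.pend k).card := by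
    simp only [Pend] at hgt; omega
  obtain ⟨b, hb⟩ := Finset.card_pos.1 (lt_of_lt_of_le Nat.zero_lt_one hy1)
  obtain ⟨hbU, wb, hwbVR, _, hEb⟩ := pend_edge_of_filter hb
  have h2 : 1 < ((C.Uset.filter fun k => x ∈ C.pend k).erase b).card := by
    have := Finset.pred_card_le_card_erase
      (a := b) (s := C.Uset.filter fun k => x ∈ C.pend k)
    omega
  obtain ⟨a1, ha1, a2, ha2, ha12⟩ := Finset.one_lt_card.1 h2
  obtain ⟨ha1b, ha1m⟩ := Finset.mem_erase.1 ha1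
  obtain ⟨ha2b, ha2m⟩ := Finset.mem_erase.1 ha2
  obtain ⟨ha1U, w1, hw1VR, _, hE1⟩ := pend_edge_of_filter ha1m
  obtain ⟨ha2U, w2, hw2VR, _, hE2⟩ := pend_edge_of_filter ha2m
  have hc1 : w1 = wb := wcollide hj hxy ha1U hbU ha1b hw1VR hwbVR hE1 hEb
  have hc2 : w2 = wb := wcollide hj hxy ha2U hbU ha2b hw2VR hwbVR hE2 hEb
  rw [← hc2] at hc1
  rw [hc1] at hE1
  exact shared_edge ha12 hE1 hE2

/-- both-sided pendants: total at most 4. -/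
lemma Pend_pair_le {j : Fin C.n} (hj : j ∈ C.I) {x y : V} (hxy : C.c j = s(x, y))
    (hx1 : 1 ≤ C.Pend x) (hy1 : 1 ≤ C.Pend y) : C.Pend x + C.Pend y ≤ 4 := by
  have h1 := PendA hj hxy hy1
  have h2 := PendA hj (hxy.trans (Sym2.eq_swap)) hx1
  omega

variable (C)

/-- heavy edges: at least 4 pendant colours at some endpoint. -/
def H : Finset (Fin C.n) := C.I.filter fun j => ∃ v ∈ evs (C.c j), 4 ≤ C.Pend v

variable {C}

lemma H_subset : C.H ⊆ C.I := Finset.filter_subset _ _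

lemma heavy_struct {j : Fin C.n} (hj : j ∈ C.H) :
    ∃ x y : V, C.c j = s(x, y) ∧ 4 ≤ C.Pend x ∧ C.Pend y = 0 := by
  have h := Finset.mem_filter.1 hj
  obtain ⟨v, hv, h4⟩ := h.2
  have hjI := h.1
  have hvc : v ∈ C.c j := mem_evs.1 hv
  refine ⟨v, Sym2.Mem.other' hvc, (Sym2.other_spec' hvc).symm, h4, ?_⟩
  by_contra h0
  have h1 : 1 ≤ C.Pend (Sym2.Mem.other' hvc) := by omega
  have := PendA hjI (Sym2.other_spec' hvc).symm h1
  omega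


variable (C)

noncomputable def hx (j : Fin C.n) : V :=
  if hj : j ∈ C.H then (heavy_struct hj).choose else (Quot.out (C.c j)).1

noncomputable def hy (j : Fin C.n) : V :=
  if hj : j ∈ C.H then (heavy_struct hj).choose_spec.choose else (Quot.out (C.c j)).1

variable {C}

lemma hxy_spec {j : Fin C.n} (hj : j ∈ C.H) :
    C.c j = s(C.hx j, C.hy j) ∧ 4 ≤ C.Pend (C.hx j) ∧ C.Pend (C.hy j) = 0 := by
  rw [hx, hy, dif_pos hj, dif_pos hj]
  exact (heavy_struct hj).choose_spec.choose_spec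

lemma hx_mem {j : Fin C.n} (hj : j ∈ C.H) : C.hx j ∈ C.c j := by
  rw [(hxy_spec hj).1]; exact Sym2.mem_mk_left _ _

lemma hy_mem {j : Fin C.n} (hj : j ∈ C.H) : C.hy j ∈ C.c j := by
  rw [(hxy_spec hj).1]; exact Sym2.mem_mk_right _ _

lemma hy_mem_VR {j : Fin C.n} (hj : j ∈ C.H) : C.hy j ∈ C.VR :=
  mem_VR (H_subset hj) (hy_mem hj)

lemma hx_mem_VR {j : Fin C.n} (hj : j ∈ C.H) : C.hx j ∈ C.VR :=
  mem_VR (H_subset hj) (hx_mem hj)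

lemma hx_ne_hy {j : Fin C.n} (hj : j ∈ C.H) : C.hx j ≠ C.hy j :=
  nd_of_edge (H_subset hj) (hxy_spec hj).1

lemma hy_inj {j j' : Fin C.n} (hj : j ∈ C.H) (hj' : j' ∈ C.H)
    (h : C.hy j = C.hy j') : j = j' := by
  by_contra hne
  exact C.hdisj j (H_subset hj) j' (H_subset hj') hne _ (hy_mem hj) (h ▸ hy_mem hj')

/-- Lemma C: an edge of an unused colour cannot join the barren endpoints of two
distinct heavy edges. -/
lemma lemC {j j' : Fin C.n} (hj : j ∈ C.H) (hj' : j' ∈ C.H) (hjj' : j ≠ j')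
    {k : Fin C.n} (hk : k ∉ C.I) (he : s(C.hy j, C.hy j') ∈ C.F k) : False := by
  obtain ⟨hcj, hPx4, hPy0⟩ := hxy_spec hj
  obtain ⟨hcj', hPx4', hPy0'⟩ := hxy_spec hj'
  -- pick m ≠ k pendant at hx j'
  have hm2 : 0 < ((C.Uset.filter fun t => C.hx j' ∈ C.pend t).erase k).card := by
    have h4 : 4 ≤ (C.Uset.filter fun t => C.hx j' ∈ C.pend t).card := hPx4'
    have := Finset.pred_card_le_card_erase
      (a := k) (s := C.Uset.filter fun t => C.hx j' ∈ C.pend t)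
    omega
  obtain ⟨m, hm⟩ := Finset.card_pos.1 hm2
  obtain ⟨hmk, hmmem⟩ := Finset.mem_erase.1 hm
  obtain ⟨hmU, wm, hwmVR, _, hEm⟩ := pend_edge_of_filter hmmem
  -- pick i ∉ {k, m} pendant at hx j with w_i ≠ w_m
  have hi2 : 1 < (((C.Uset.filter fun t => C.hx j ∈ C.pend t).erase k).erase m).card := by
    have h4 : 4 ≤ (C.Uset.filter fun t => C.hx j ∈ C.pend t).card := hPx4
    have h5 := Finset.pred_card_le_card_erase
      (a := k) (s := C.Uset.filter fun t => C.hx j ∈ C.pend t)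
    have h6 := Finset.pred_card_le_card_erase
      (a := m) (s := (C.Uset.filter fun t => C.hx j ∈ C.pend t).erase k)
    omega
  obtain ⟨i1, hi1, i2, hi2', hi12⟩ := Finset.one_lt_card.1 hi2
  have hi1m := (Finset.mem_erase.1 hi1).1
  have hi1k := (Finset.mem_erase.1 (Finset.mem_erase.1 hi1).2).1
  have hi1mem := (Finset.mem_erase.1 (Finset.mem_erase.1 hi1).2).2
  have hi2m := (Finset.mem_erase.1 hi2').1
  have hi2k := (Finset.mem_erase.1 (Finset.mem_erase.1 hi2').2).1
  have hi2mem := (Finset.mem_erase.1 (Finset.mem_erase.1 hi2').2).2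
  obtain ⟨hi1U, w1, hw1VR, _, hE1⟩ := pend_edge_of_filter hi1mem
  obtain ⟨hi2U, w2, hw2VR, _, hE2⟩ := pend_edge_of_filter hi2mem
  have hw12 : w1 ≠ w2 := by
    intro h
    rw [h] at hE1
    exact shared_edge hi12 hE1 hE2
  -- choose the one avoiding wm
  obtain ⟨i, hiU, hik, him, wi, hwiVR, hEi, hwim⟩ :
      ∃ i, i ∉ C.I ∧ i ≠ k ∧ i ≠ m ∧ ∃ wi, wi ∉ C.VR ∧ s(C.hx j, wi) ∈ C.F i ∧ wi ≠ wm := by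
    by_cases h : w1 = wm
    · exact ⟨i2, hi2U, hi2k, hi2m, w2, hw2VR, hE2, by rw [← h]; exact fun hh => hw12 hh.symm⟩
    · exact ⟨i1, hi1U, hi1k, hi1m, w1, hw1VR, hE1, h⟩
  clear hi1 hi2' hi12 hi1m hi1k hi1mem hi2m hi2k hi2mem hE1 hE2 hw12 hw1VR hw2VR hi1U hi2U
  -- now build the big rainbow matching
  have hq2 : 2 ≤ C.q := by
    have : ({j, j'} : Finset (Fin C.n)) ⊆ C.I := by
      intro t ht
      rcases Finset.mem_insert.1 ht with rfl | ht
      · exact H_subset hj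
      · rw [Finset.mem_singleton] at ht; subst ht; exact H_subset hj'
    have := Finset.card_le_card this
    rw [Finset.card_pair hjj'] at this
    exact this
  -- vertex facts
  have hxj_yj : C.hx j ≠ C.hy j := hx_ne_hy hj
  have hxj'_yj' : C.hx j' ≠ C.hy j' := hx_ne_hy hj'
  have hRdisj : ∀ v, v ∈ C.c j → v ∉ C.c j' :=
    C.hdisj j (H_subset hj) j' (H_subset hj') hjj'
  have hxj_yj' : C.hx j ≠ C.hy j' := fun h => hRdisj _ (hx_mem hj) (h ▸ hy_mem hj')
  have hxj_xj' : C.hx j ≠ C.hx j' := fun h => hRdisj _ (hx_mem hj) (h ▸ hx_mem hj')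
  have hyj_xj' : C.hy j ≠ C.hx j' := fun h => hRdisj _ (hy_mem hj) (h ▸ hx_mem hj')
  have hyj_yj' : C.hy j ≠ C.hy j' := fun h => hjj' (hy_inj hj hj' h)
  have hkm : k ≠ m := fun h => hmk h.symm
  -- the three new edges
  set e1 : Sym2 V := s(C.hx j, wi) with he1def
  set e2 : Sym2 V := s(C.hy j, C.hy j') with he2def
  set e3 : Sym2 V := s(C.hx j', wm) with he3def
  have hmemVR : ∀ v : V, v ∈ e2 → v ∈ C.VR := by
    intro v hv
    rcases Sym2.mem_iff.1 hv with rfl | rfl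
    · exact hy_mem_VR hj
    · exact hy_mem_VR hj'
  have hdisj12 : ∀ v, v ∈ e1 → v ∉ e2 := by
    intro v hv hv'
    rcases Sym2.mem_iff.1 hv with rfl | rfl <;> rcases Sym2.mem_iff.1 hv' with h | h
    · exact hxj_yj h
    · exact hxj_yj' h
    · exact hwiVR (h ▸ hy_mem_VR hj)
    · exact hwiVR (h ▸ hy_mem_VR hj')
  have hdisj13 : ∀ v, v ∈ e1 → v ∉ e3 := by
    intro v hv hv'
    rcases Sym2.mem_iff.1 hv with rfl | rfl <;> rcases Sym2.mem_iff.1 hv' with h | h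
    · exact hxj_xj' h
    · exact hwmVR (h ▸ hx_mem_VR hj)
    · exact hwiVR (h ▸ hx_mem_VR hj')
    · exact hwim h
  have hdisj23 : ∀ v, v ∈ e2 → v ∉ e3 := by
    intro v hv hv'
    rcases Sym2.mem_iff.1 hv with rfl | rfl <;> rcases Sym2.mem_iff.1 hv' with h | h
    · exact hyj_xj' h
    · exact hwmVR (h ▸ hy_mem_VR hj)
    · exact hxj'_yj' h.symm
    · exact hwmVR (h ▸ hy_mem_VR hj')
  -- vertices of new edges avoid all old edges except c j, c j'
  have hold : ∀ (e : Sym2 V), (e = e1 ∨ e = e2 ∨ e = e3) →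
      ∀ j'' ∈ (C.I.erase j).erase j', ∀ v, v ∈ e → v ∉ C.c j'' := by
    rintro e he j'' hj'' v hv hvc
    obtain ⟨hj''j', hj''r⟩ := Finset.mem_erase.1 hj''
    obtain ⟨hj''j, hj''I⟩ := Finset.mem_erase.1 hj''r
    have hvVR : v ∈ C.VR := mem_VR hj''I hvc
    have hnotj : v ∈ C.c j → False := fun h =>
      C.hdisj j (H_subset hj) j'' hj''I (Ne.symm hj''j) v h hvc
    have hnotj' : v ∈ C.c j' → False := fun h =>
      C.hdisj j' (H_subset hj') j'' hj''I (Ne.symm hj''j') v h hvc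
    rcases he with rfl | rfl | rfl <;> rcases Sym2.mem_iff.1 hv with h | h
    · exact hnotj (h ▸ hx_mem hj)
    · exact hwiVR (h ▸ hvVR)
    · exact hnotj (h ▸ hy_mem hj)
    · exact hnotj' (h ▸ hy_mem hj')
    · exact hnotj' (h ▸ hx_mem hj')
    · exact hwmVR (h ▸ hvVR)
  have hNcard : ({i, k, m} : Finset (Fin C.n)).card = 3 :=
    Finset.card_eq_three.2 ⟨i, k, m, hik, him, hkm, rfl⟩
  have hIcard : ((C.I.erase j).erase j').card + 2 = C.I.card := by
    have hj'mem : j' ∈ C.I.erase j :=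
      Finset.mem_erase.2 ⟨Ne.symm hjj', H_subset hj'⟩
    rw [Finset.card_erase_of_mem hj'mem, Finset.card_erase_of_mem (H_subset hj)]
    have hqdef : C.q = C.I.card := rfl
    omega
  have hnd : ∀ t, (if t = i then e1 else if t = k then e2 else e3) = e1 ∨
      (if t = i then e1 else if t = k then e2 else e3) = e2 ∨
      (if t = i then e1 else if t = k then e2 else e3) = e3 := by
    intro t
    by_cases h1 : t = i
    · exact Or.inl (by rw [if_pos h1])
    by_cases h2 : t = k
    · exact Or.inr (Or.inl (by rw [if_neg h1, if_pos h2]))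
    · exact Or.inr (Or.inr (by rw [if_neg h1, if_neg h2]))
  have key : ((C.I.erase j).erase j').card + ({i, k, m} : Finset (Fin C.n)).card ≤ C.q := by
    refine ext_le ((Finset.erase_subset _ _).trans (Finset.erase_subset _ _)) ?_
      (fun t => if t = i then e1 else if t = k then e2 else e3) ?_ ?_ ?_
    · intro t ht
      rcases Finset.mem_insert.1 ht with rfl | ht
      · exact hiU
      rcases Finset.mem_insert.1 ht with rfl | ht
      · exact hk
      · rw [Finset.mem_singleton] at ht; subst ht; exact hmU
    · intro t ht
      rcases Finset.mem_insert.1 ht with rfl | ht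
      · simpa using hEi
      rcases Finset.mem_insert.1 ht with rfl | ht
      · simp only [if_neg (Ne.symm hik), if_pos rfl]
        exact he
      · rw [Finset.mem_singleton] at ht; subst ht
        simp only [if_neg (Ne.symm him), if_neg (Ne.symm hkm)]
        exact hEm
    · intro s hs t ht hst v hvs hvt
      have hmem3 : ∀ r ∈ ({i, k, m} : Finset (Fin C.n)), r = i ∨ r = k ∨ r = m := by
        intro r hr
        rcases Finset.mem_insert.1 hr with rfl | hr
        · exact Or.inl rfl
        rcases Finset.mem_insert.1 hr with rfl | hr
        · exact Or.inr (Or.inl rfl)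
        · rw [Finset.mem_singleton] at hr; exact Or.inr (Or.inr hr)
      rcases hmem3 s hs with rfl | rfl | rfl <;> rcases hmem3 t ht with rfl | rfl | rfl
      · exact absurd rfl hst
      · simp only [if_pos rfl] at hvs
        simp only [if_neg (Ne.symm hik), if_pos rfl] at hvt
        exact hdisj12 v hvs hvt
      · simp only [if_pos rfl] at hvs
        simp only [if_neg (Ne.symm him), if_neg (Ne.symm hkm)] at hvt
        exact hdisj13 v hvs hvt
      · simp only [if_pos rfl] at hvt
        simp only [if_neg (Ne.symm hik), if_pos rfl] at hvs
        exact hdisj12 v hvt hvs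
      · exact absurd rfl hst
      · simp only [if_neg (Ne.symm hik), if_pos rfl] at hvs
        simp only [if_neg (Ne.symm him), if_neg (Ne.symm hkm)] at hvt
        exact hdisj23 v hvs hvt
      · simp only [if_pos rfl] at hvt
        simp only [if_neg (Ne.symm him), if_neg (Ne.symm hkm)] at hvs
        exact hdisj13 v hvt hvs
      · simp only [if_neg (Ne.symm hik), if_pos rfl] at hvt
        simp only [if_neg (Ne.symm him), if_neg (Ne.symm hkm)] at hvs
        exact hdisj23 v hvt hvs
      · exact absurd rfl hst
    · intro t ht j'' hj'' v hv
      exact hold _ (hnd t) j'' hj'' v hv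
  rw [hNcard] at key
  have hqdef : C.q = C.I.card := rfl
  omega


lemma sym2_repr (e : Sym2 V) : ∃ x y : V, e = s(x, y) := by
  induction e using Sym2.ind with
  | _ x y => exact ⟨x, y, rfl⟩

variable (C)

def unc (k : Fin C.n) : Finset V := C.VR \ C.cov k

noncomputable def cK (k : Fin C.n) : Finset (Fin C.n) := C.H.filter fun j => C.hy j ∈ C.cov k

variable {C}

lemma cov_unc (k : Fin C.n) : (C.cov k).card + (C.unc k).card = 2 * C.q := by
  have h := Finset.card_sdiff_add_card_eq_card (cov_subset_VR (C := C) k)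
  rw [card_VR] at h
  rw [unc]
  omega

/-- E3 : `h ≤ unc_k + cK_k`. -/
lemma E3 {k : Fin C.n} (hk : k ∉ C.I) :
    C.H.card ≤ (C.unc k).card + (C.cK k).card := by
  have hsplit := Finset.card_filter_add_card_filter_not
    (s := C.H) (p := fun j => C.hy j ∈ C.cov k)
  have hinj : (C.H.filter fun j => ¬ C.hy j ∈ C.cov k).card ≤ (C.unc k).card := by
    refine Finset.card_le_card_of_injOn C.hy ?_ ?_
    · intro j hj
      obtain ⟨hjH, hjcov⟩ := Finset.mem_filter.1 hj
      exact Finset.mem_sdiff.2 ⟨hy_mem_VR hjH, hjcov⟩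
    · intro j1 hj1 j2 hj2 h
      exact hy_inj (Finset.mem_filter.1 hj1).1 (Finset.mem_filter.1 hj2).1 h
  have hck : C.cK k = C.H.filter fun j => C.hy j ∈ C.cov k := rfl
  rw [← hck] at hsplit
  omega

/-- The barren vertices of heavy edges. -/
lemma Pend_hy_zero {j : Fin C.n} (hj : j ∈ C.H) : C.Pend (C.hy j) = 0 := (hxy_spec hj).2.2

lemma not_pend_hy {j k : Fin C.n} (hj : j ∈ C.H) (hk : k ∉ C.I)
    (h : C.hy j ∈ C.pend k) : False := by
  have : k ∈ C.Uset.filter fun t => C.hy j ∈ C.pend t :=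
    Finset.mem_filter.2 ⟨mem_Uset.2 hk, h⟩
  have hpos : 0 < C.Pend (C.hy j) := Finset.card_pos.2 ⟨k, this⟩
  rw [Pend_hy_zero hj] at hpos
  omega

/-- E4 : `cK_k + h + pend_k ≤ 2q`. -/
lemma E4 {k : Fin C.n} (hk : k ∉ C.I) :
    (C.cK k).card + C.H.card + (C.pend k).card ≤ 2 * C.q := by
  classical
  set HY : Finset V := C.H.image C.hy with hHYdef
  have hHYcard : HY.card = C.H.card := by
    rw [hHYdef]
    exact Finset.card_image_of_injOn fun j1 hj1 j2 hj2 h => hy_inj hj1 hj2 h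
  have hHYsub : HY ⊆ C.VR := by
    intro v hv
    obtain ⟨j, hj, rfl⟩ := Finset.mem_image.1 hv
    exact hy_mem_VR hj
  have hHYpend : Disjoint HY (C.pend k) := by
    rw [Finset.disjoint_left]
    rintro v hv hv'
    obtain ⟨j, hj, rfl⟩ := Finset.mem_image.1 hv
    exact not_pend_hy hj hk hv'
  -- choose the far endpoints of crossing edges
  have hch : ∀ j : Fin C.n, ∃ z : V, j ∈ C.cK k →
      z ∈ C.VR ∧ z ∉ HY ∧ z ∉ C.pend k ∧ z ≠ C.hy j ∧ s(C.hy j, z) ∈ C.F k := by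
    intro j
    by_cases hj : j ∈ C.cK k
    · obtain ⟨hjH, hjcov⟩ := Finset.mem_filter.1 hj
      obtain ⟨e, he, hmem⟩ := Finset.mem_biUnion.1 hjcov
      have hyje : C.hy j ∈ e := mem_evs.1 (Finset.mem_inter.1 hmem).1
      set z := Sym2.Mem.other' hyje with hzdef
      have hez : s(C.hy j, z) = e := Sym2.other_spec' hyje
      have hzne : z ≠ C.hy j := by
        intro h
        have hd := C.hnd k e he
        rw [← hez, Sym2.mk_isDiag_iff] at hd
        exact hd h.symm
      have hEz : s(C.hy j, z) ∈ C.F k := by rw [hez]; exact he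
      have hzVR : z ∈ C.VR := by
        by_contra hzVR
        exact not_pend_hy hjH hk (mem_pend hEz (hy_mem_VR hjH) hzVR)
      refine ⟨z, fun _ => ⟨hzVR, ?_, ?_, hzne, hEz⟩⟩
      · intro hzHY
        obtain ⟨j', hj', hzj'⟩ := Finset.mem_image.1 hzHY
        have hne : j ≠ j' := by
          rintro rfl
          exact hzne hzj'.symm
        refine lemC hjH hj' hne hk ?_
        rw [← hzj'] at hEz
        exact hEz
      · intro hzpend
        obtain ⟨w, hwVR, hwz, hEw⟩ := pend_edge hzpend
        have heq : s(z, w) = s(C.hy j, z) :=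
          edge_unique hEw hEz (Sym2.mem_mk_left z w) (Sym2.mem_mk_right (C.hy j) z)
        have : C.hy j ∈ s(z, w) := by rw [heq]; exact Sym2.mem_mk_left _ _
        rcases Sym2.mem_iff.1 this with h | h
        · exact hzne h.symm
        · rw [← h] at hwVR
          exact hwVR (hy_mem_VR hjH)
    · exact ⟨C.hy j, fun h => absurd h hj⟩
  choose z hz using hch
  have hcard : (C.cK k).card ≤ (C.VR \ (HY ∪ C.pend k)).card := by
    refine Finset.card_le_card_of_injOn z ?_ ?_
    · intro j hj
      obtain ⟨h1, h2, h3, _, _⟩ := hz j hj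
      exact Finset.mem_sdiff.2 ⟨h1, fun h => (Finset.mem_union.1 h).elim h2 h3⟩
    · intro j1 hj1 j2 hj2 heq
      obtain ⟨_, _, _, hne1, hE1⟩ := hz j1 hj1
      obtain ⟨_, _, _, hne2, hE2⟩ := hz j2 hj2
      rw [heq] at hE1 hne1
      have h12 : s(C.hy j1, z j2) = s(C.hy j2, z j2) :=
        edge_unique hE1 hE2 (Sym2.mem_mk_right _ _) (Sym2.mem_mk_right _ _)
      have : C.hy j1 ∈ s(C.hy j2, z j2) := by
        rw [← h12]; exact Sym2.mem_mk_left _ _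
      rcases Sym2.mem_iff.1 this with h | h
      · exact hy_inj (Finset.mem_filter.1 hj1).1 (Finset.mem_filter.1 hj2).1 h
      · exact absurd h.symm hne1
  have hsub : HY ∪ C.pend k ⊆ C.VR :=
    Finset.union_subset hHYsub (pend_subset_VR k)
  have hcard2 := Finset.card_sdiff_add_card_eq_card hsub
  have hcup := Finset.card_union_of_disjoint hHYpend
  rw [card_VR] at hcard2
  omega


/-- per-colour inequality 1. -/
lemma perk1 {k : Fin C.n} (hk : k ∈ C.Uset) :
    2 * C.n + (C.unc k).card ≤ (C.pend k).card + 2 * C.q := by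
  have h1 := cov_pend_count (C := C) (mem_Uset.1 hk)
  have h2 := cov_unc (C := C) k
  omega

/-- per-colour inequality 2. -/
lemma perk2 {k : Fin C.n} (hk : k ∈ C.Uset) :
    2 * C.H.card + (C.pend k).card ≤ (C.unc k).card + 2 * C.q := by
  have h1 := E3 (C := C) (mem_Uset.1 hk)
  have h2 := E4 (C := C) (mem_Uset.1 hk)
  omega

/-- summed inequality A : `2nu + 2hu ≤ 4qu`. -/
lemma sumA : 2 * C.n * C.u + 2 * C.H.card * C.u ≤ 4 * C.q * C.u := by
  have s1 : ∑ k ∈ C.Uset, (2 * C.n + (C.unc k).card)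
      ≤ ∑ k ∈ C.Uset, ((C.pend k).card + 2 * C.q) :=
    Finset.sum_le_sum fun k hk => perk1 hk
  have s2 : ∑ k ∈ C.Uset, (2 * C.H.card + (C.pend k).card)
      ≤ ∑ k ∈ C.Uset, ((C.unc k).card + 2 * C.q) :=
    Finset.sum_le_sum fun k hk => perk2 hk
  simp only [Finset.sum_add_distrib, Finset.sum_const, smul_eq_mul] at s1 s2
  have hcard : C.Uset.card = C.u := rfl
  rw [hcard] at s1 s2
  ring_nf at s1 s2 ⊢
  linarith

/-- The total pendant count equals the vertex-wise sum over `R`-edges. -/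
lemma Tsum : ∑ k ∈ C.Uset, (C.pend k).card
    = ∑ j ∈ C.I, ∑ v ∈ evs (C.c j), C.Pend v := by
  have step1 : ∀ k, (C.pend k).card = ∑ v ∈ C.VR, if v ∈ C.pend k then 1 else 0 := by
    intro k
    rw [← Finset.card_filter]
    congr 1
    rw [Finset.filter_mem_eq_inter]
    exact (Finset.inter_eq_right.2 (pend_subset_VR k)).symm
  have step2 : ∑ k ∈ C.Uset, (C.pend k).card = ∑ v ∈ C.VR, C.Pend v := by
    simp only [step1]
    rw [Finset.sum_comm]
    refine Finset.sum_congr rfl fun v _ => ?_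
    rw [Pend, Finset.card_filter]
  rw [step2, VR]
  refine Finset.sum_biUnion ?_
  intro a ha b hb hab
  simp only [Finset.disjoint_left, mem_evs]
  intro v hv
  exact C.hdisj a ha b hb hab v hv

/-- upper bound on the total pendant count. -/
lemma sumB : ∑ k ∈ C.Uset, (C.pend k).card
    ≤ C.u * C.H.card + 4 * ((C.I \ C.H).card) := by
  rw [Tsum]
  rw [← Finset.sum_sdiff (H_subset (C := C))]
  have hH : ∀ j ∈ C.H, ∑ v ∈ evs (C.c j), C.Pend v ≤ C.u := by
    intro j hj
    obtain ⟨hxy, _, hy0⟩ := hxy_spec hj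
    rw [hxy, evs_mk, Finset.sum_pair (hx_ne_hy hj)]
    rw [hy0]
    have := Pend_le_u (C := C) (C.hx j)
    omega
  have hIH : ∀ j ∈ C.I \ C.H, ∑ v ∈ evs (C.c j), C.Pend v ≤ 4 := by
    intro j hj
    obtain ⟨hjI, hjH⟩ := Finset.mem_sdiff.1 hj
    obtain ⟨x, y, hxy⟩ := sym2_repr (C.c j)
    have hxney : x ≠ y := nd_of_edge hjI hxy
    rw [hxy, evs_mk, Finset.sum_pair hxney]
    have hnot : ∀ v ∈ evs (C.c j), C.Pend v ≤ 3 := by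
      intro v hv
      by_contra hgt
      exact hjH (Finset.mem_filter.2 ⟨hjI, ⟨v, hv, by omega⟩⟩)
    have hx3 : C.Pend x ≤ 3 := hnot x (by rw [hxy, evs_mk]; simp)
    have hy3 : C.Pend y ≤ 3 := hnot y (by rw [hxy, evs_mk]; simp)
    by_cases hx0 : C.Pend x = 0
    · omega
    by_cases hy0 : C.Pend y = 0
    · omega
    · have := Pend_pair_le hjI hxy (by omega) (by omega)
      omega
  calc ∑ j ∈ C.I \ C.H, ∑ v ∈ evs (C.c j), C.Pend v
        + ∑ j ∈ C.H, ∑ v ∈ evs (C.c j), C.Pend v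
      ≤ (C.I \ C.H).card * 4 + C.H.card * C.u := by
        gcongr ?_ + ?_
        · calc ∑ j ∈ C.I \ C.H, ∑ v ∈ evs (C.c j), C.Pend v
              ≤ ∑ _j ∈ C.I \ C.H, 4 := Finset.sum_le_sum hIH
            _ = (C.I \ C.H).card * 4 := by rw [Finset.sum_const, smul_eq_mul]
        · calc ∑ j ∈ C.H, ∑ v ∈ evs (C.c j), C.Pend v
              ≤ ∑ _j ∈ C.H, C.u := Finset.sum_le_sum hH
            _ = C.H.card * C.u := by rw [Finset.sum_const, smul_eq_mul]
    _ = C.u * C.H.card + 4 * (C.I \ C.H).card := by ring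
 
/-- summed inequality B : `2nu ≤ uh + 4g + 2qu`. -/
lemma sumC : 2 * C.n * C.u ≤ C.u * C.H.card + 4 * ((C.I \ C.H).card) + 2 * C.q * C.u := by
  have s1 : ∑ k ∈ C.Uset, (2 * C.n + (C.unc k).card)
      ≤ ∑ k ∈ C.Uset, ((C.pend k).card + 2 * C.q) :=
    Finset.sum_le_sum fun k hk => perk1 hk
  simp only [Finset.sum_add_distrib, Finset.sum_const, smul_eq_mul] at s1
  have hcard : C.Uset.card = C.u := rfl
  rw [hcard] at s1
  have hB := sumB (C := C)
  have hunc : 0 ≤ ∑ k ∈ C.Uset, (C.unc k).card := Nat.zero_le _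
  ring_nf at s1 hB ⊢
  linarith

/-- The main inequality, in context form. -/
lemma final_ineq : (3 * (C.n : ℝ) - 4 * (C.q : ℝ)) * ((C.n : ℝ) - (C.q : ℝ))
    ≤ 6 * (C.q : ℝ) := by
  have hqu := q_add_u (C := C)
  by_cases hu : C.u = 0
  · have hnq : C.n = C.q := by omega
    rw [hnq, sub_self, mul_zero]
    positivity
  · have hu1 : 1 ≤ C.u := by omega
    have hA := sumA (C := C)
    have hC := sumC (C := C)
    have hgh := Finset.card_sdiff_add_card_eq_card (H_subset (C := C))
    -- notation
    set nn := C.n; set qq := C.q; set uu := C.u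
    set hh := C.H.card; set gg := (C.I \ C.H).card
    have hgq : gg + hh = qq := hgh
    -- divide hA by uu
    have hA' : 2 * nn + 2 * hh ≤ 4 * qq := by
      have hmul : (2 * nn + 2 * hh) * uu ≤ (4 * qq) * uu := by
        calc (2 * nn + 2 * hh) * uu = 2 * nn * uu + 2 * hh * uu := by ring
          _ ≤ 4 * qq * uu := hA
          _ = (4 * qq) * uu := by ring
      exact Nat.le_of_mul_le_mul_right hmul (by omega)
    -- now work over ℝ
    have hF4 : (qq : ℝ) + (uu : ℝ) = (nn : ℝ) := by exact_mod_cast congrArg (Nat.cast (R := ℝ)) hqu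
    have hF3 : (gg : ℝ) + (hh : ℝ) = (qq : ℝ) := by exact_mod_cast congrArg (Nat.cast (R := ℝ)) hgq
    have hF1 : 2 * (nn : ℝ) + 2 * hh ≤ 4 * qq := by exact_mod_cast hA'
    have hF2 : 2 * (nn : ℝ) * uu ≤ uu * hh + 4 * gg + 2 * qq * uu := by exact_mod_cast hC
    have hexp : (nn : ℝ) * uu = qq * uu + uu * uu := by rw [← hF4]; ring
    have h2u : 2 * (uu : ℝ) * uu ≤ uu * hh + 4 * gg := by nlinarith
    have hug : (uu : ℝ) ≤ gg := by linarith
    have hgu2 : (uu : ℝ) * uu ≤ gg * uu := by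
      have h0 : (0 : ℝ) ≤ uu := by positivity
      nlinarith
    have htarget : (3 * (nn : ℝ) - 4 * qq) * ((nn : ℝ) - qq) = 3 * uu * uu - qq * uu := by
      rw [← hF4]; ring
    rw [htarget]
    have hh0 : (0 : ℝ) ≤ hh := by positivity
    have hqsplit : (qq : ℝ) * uu = gg * uu + hh * uu := by rw [← hF3]; ring
    nlinarith
 
end Ctx
end Stmt19

/-- Let `F₁, …, Fₙ` be pairwise disjoint matchings of size `n` in a
graph, and let `q = |I|` be the maximum size of a rainbow matching. Then
`(3n - 4q)(n - q) ≤ 6q`. -/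
theorem stmt_19 {V : Type*} [DecidableEq V] (G : SimpleGraph V) (n : ℕ)
    (F : Fin n → Finset (Sym2 V))
    (hedges : ∀ i, ∀ e ∈ F i, e ∈ G.edgeSet)
    (hmatch : ∀ i, ∀ e ∈ F i, ∀ f ∈ F i, e ≠ f → ∀ v, v ∈ e → v ∉ f)
    (hsize : ∀ i, (F i).card = n)
    (hdisjF : ∀ i j, i ≠ j → Disjoint (F i) (F j))
    (I : Finset (Fin n)) (c : Fin n → Sym2 V)
    (hc : ∀ i ∈ I, c i ∈ F i)
    (hdisj : ∀ i ∈ I, ∀ j ∈ I, i ≠ j → ∀ v, v ∈ c i → v ∉ c j)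
    (hmax : ∀ (J : Finset (Fin n)) (d : Fin n → Sym2 V),
      (∀ i ∈ J, d i ∈ F i) →
      (∀ i ∈ J, ∀ j ∈ J, i ≠ j → ∀ v, v ∈ d i → v ∉ d j) →
      J.card ≤ I.card) :
    (3 * (n : ℝ) - 4 * (I.card : ℝ)) * ((n : ℝ) - (I.card : ℝ)) ≤ 6 * (I.card : ℝ) := by
  have hnd : ∀ i, ∀ e ∈ F i, ¬ e.IsDiag := fun i e he =>
    G.not_isDiag_of_mem_edgeSet (hedges i e he)
  exact Stmt19.Ctx.final_ineq
    (C := ⟨n, F, I, c, hnd, hmatch, hsize, hdisjF, hc, hdisj, hmax⟩)
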